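/- For n > 4, two subsets A, B of [n] are 1-orthogonal if and only if A ⊆ B, or B ⊆ A, or A ∩ B = ∅, or A ∪ B = [n]. -/

import Mathlib

/-- A hypergraph on vertex set `Fin n`, identified with its family of hyperedges. -/
abbrev Family (n : ℕ) := Set (Finset (Fin n))

/-- Membership in the class `K_r(n)`: rules (k0), (k1), (k2). -/
def MemK (r n : ℕ) (E : Family n) : Prop :=
  (∀ X : Finset (Fin n), X.card ≤ r → X ∈ E) ∧
  (∀ A ∈ E, Aᶜ ∈ E) ∧
  (∀ A ∈ E, ∀ B ∈ E, r ≤ (A ∩ B).card → A ∪ B ∈ E)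

/-- Membership in the class `K⊥_r(n)`: only rules (k0) and (k1). -/
def MemKbot (r n : ℕ) (E : Family n) : Prop :=
  (∀ X : Finset (Fin n), X.card ≤ r → X ∈ E) ∧
  (∀ A ∈ E, Aᶜ ∈ E)

/-- Closure of `H` in `K_r(n)`: intersection of all members of `K_r(n)` containing `H`. -/
def clr (r n : ℕ) (H : Family n) : Family n :=
  ⋂₀ {E | MemK r n E ∧ H ⊆ E}

/-- Closure of `H` in `K⊥_r(n)`. -/
def clbot (r n : ℕ) (H : Family n) : Family n :=
  ⋂₀ {E | MemKbot r n E ∧ H ⊆ E}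

/-- `A` and `B` are `r`-orthogonal. -/
def Ortho (r n : ℕ) (A B : Finset (Fin n)) : Prop :=
  clr r n {A, B} = clbot r n {A, B}

/-- A family is `r`-cross-free if all pairs of members are `r`-orthogonal. -/
def CrossFree (r n : ℕ) (H : Family n) : Prop :=
  ∀ A ∈ H, ∀ B ∈ H, Ortho r n A B

-- auxiliary
def R {n : ℕ} (A B : Finset (Fin n)) : Prop :=
  A ⊆ B ∨ B ⊆ A ∨ A ∩ B = ∅ ∨ A ∪ B = Finset.univ

variable {n : ℕ}

lemma R_symm {A B : Finset (Fin n)} (h : R A B) : R B A := by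
  unfold R at *
  rw [Finset.inter_comm B A, Finset.union_comm B A]
  tauto

lemma R_compl_right {A B : Finset (Fin n)} (h : R A B) : R A Bᶜ := by
  rcases h with h | h | h | h
  · right; right; left
    ext x
    simp only [Finset.mem_inter, Finset.mem_compl, Finset.notMem_empty, iff_false, not_and,
      not_not]
    exact fun hx => h hx
  · right; right; right
    ext x
    simp only [Finset.mem_union, Finset.mem_compl, Finset.mem_univ, iff_true]
    by_cases hx : x ∈ B
    · exact Or.inl (h hx)
    · exact Or.inr hx
  · left
    intro x hx
    simp only [Finset.mem_compl]
    intro hxB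
    have : x ∈ A ∩ B := Finset.mem_inter.mpr ⟨hx, hxB⟩
    simp [h] at this
  · right; left
    intro x hx
    simp only [Finset.mem_compl] at hx
    have hx2 : x ∈ A ∪ B := h ▸ Finset.mem_univ x
    rcases Finset.mem_union.mp hx2 with h1 | h1
    · exact h1
    · exact absurd h1 hx

lemma R_cases {A B : Finset (Fin n)} (h : R A B) {X Y : Finset (Fin n)}
    (hX : X = A ∨ X = Aᶜ ∨ X = B ∨ X = Bᶜ) (hY : Y = A ∨ Y = Aᶜ ∨ Y = B ∨ Y = Bᶜ) :
    R X Y := by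
  have hrefl : ∀ C : Finset (Fin n), R C C := fun C => Or.inl (subset_refl C)
  have hcompl : ∀ C : Finset (Fin n), R C Cᶜ := fun C =>
    Or.inr (Or.inr (Or.inl (by simp)))
  have h1 : R A Bᶜ := R_compl_right h
  have h2 : R Aᶜ B := R_symm (R_compl_right (R_symm h))
  have h3 : R Aᶜ Bᶜ := R_compl_right h2
  rcases hX with hx | hx | hx | hx <;> rcases hY with hy | hy | hy | hy <;> rw [hx, hy]
  · exact hrefl A
  · exact hcompl A
  · exact h
  · exact h1
  · exact R_symm (hcompl A)
  · exact hrefl Aᶜ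
  · exact h2
  · exact h3
  · exact R_symm h
  · exact R_symm h2
  · exact hrefl B
  · exact hcompl B
  · exact R_symm h1
  · exact R_symm h3
  · exact R_symm (hcompl B)
  · exact hrefl Bᶜ

lemma R_union {X Y : Finset (Fin n)} (h : R X Y) (hc : 1 ≤ (X ∩ Y).card) :
    X ∪ Y = Y ∨ X ∪ Y = X ∨ X ∪ Y = Finset.univ := by
  rcases h with h | h | h | h
  · exact Or.inl (Finset.union_eq_right.mpr h)
  · exact Or.inr (Or.inl (Finset.union_eq_left.mpr h))
  · simp [h] at hc
  · exact Or.inr (Or.inr h)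

def E0 {n : ℕ} (A B : Finset (Fin n)) : Family n :=
  {X | X.card ≤ 1 ∨ Xᶜ.card ≤ 1 ∨ X = A ∨ X = Aᶜ ∨ X = B ∨ X = Bᶜ}

lemma memKbot_E0 (A B : Finset (Fin n)) : MemKbot 1 n (E0 A B) := by
  constructor
  · intro X hX; exact Or.inl hX
  · intro X hX
    rcases hX with h | h | h | h | h | h
    · right; left; simpa using h
    · left; simpa using h
    · subst h; right; right; right; left; rfl
    · subst h; right; right; left; rw [compl_compl]
    · subst h; right; right; right; right; right; rfl
    · subst h; right; right; right; right; left; rw [compl_compl]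

lemma pair_subset_E0 (A B : Finset (Fin n)) : ({A, B} : Family n) ⊆ E0 A B := by
  intro X hX
  rcases hX with h | h
  · subst h; right; right; left; rfl
  · simp only [Set.mem_singleton_iff] at h; subst h
    right; right; right; right; left; rfl

lemma clbot_eq (A B : Finset (Fin n)) : clbot 1 n {A, B} = E0 A B := by
  apply subset_antisymm
  · exact Set.sInter_subset_of_mem ⟨memKbot_E0 A B, pair_subset_E0 A B⟩
  · intro X hX
    refine Set.mem_sInter.mpr ?_
    rintro E ⟨⟨h0, h1⟩, hH⟩
    have hA : A ∈ E := hH (by left; rfl)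
    have hB : B ∈ E := hH (by right; rfl)
    rcases hX with h | h | h | h | h | h
    · exact h0 X h
    · have := h1 Xᶜ (h0 Xᶜ h); rwa [compl_compl] at this
    · subst h; exact hA
    · subst h; exact h1 A hA
    · subst h; exact hB
    · subst h; exact h1 B hB

lemma clbot_subset_clr (r n : ℕ) (H : Family n) : clbot r n H ⊆ clr r n H := by
  apply Set.sInter_subset_sInter
  rintro E ⟨hE, hH⟩
  exact ⟨⟨hE.1, hE.2.1⟩, hH⟩

lemma subset_clr (r n : ℕ) (H : Family n) : H ⊆ clr r n H := by
  intro X hX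
  exact Set.mem_sInter.mpr fun E hE => hE.2 hX

lemma memK_clr (r n : ℕ) (H : Family n) : MemK r n (clr r n H) := by
  refine ⟨?_, ?_, ?_⟩
  · intro X hX
    exact Set.mem_sInter.mpr fun E hE => hE.1.1 X hX
  · intro X hX
    exact Set.mem_sInter.mpr fun E hE => hE.1.2.1 X (Set.mem_sInter.mp hX E hE)
  · intro X hX Y hY hc
    exact Set.mem_sInter.mpr fun E hE =>
      hE.1.2.2 X (Set.mem_sInter.mp hX E hE) Y (Set.mem_sInter.mp hY E hE) hc

lemma E0_k2 {A B : Finset (Fin n)} (h : R A B) :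
    ∀ X ∈ E0 A B, ∀ Y ∈ E0 A B, 1 ≤ (X ∩ Y).card → X ∪ Y ∈ E0 A B := by
  intro X hX Y hY hc
  rcases hX with h1 | h1 | hX4
  · -- X small: X ⊆ Y
    have hle : (X ∩ Y).card ≤ X.card := Finset.card_le_card Finset.inter_subset_left
    have hsub : X ∩ Y = X := Finset.eq_of_subset_of_card_le Finset.inter_subset_left
      (by omega)
    have : X ⊆ Y := Finset.inter_eq_left.mp hsub
    rwa [Finset.union_eq_right.mpr this]
  · -- X cosmall
    right; left
    have : (X ∪ Y)ᶜ ⊆ Xᶜ := by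
      rw [Finset.compl_union]; exact Finset.inter_subset_left
    exact le_trans (Finset.card_le_card this) h1
  · rcases hY with h1 | h1 | hY4
    · have hle : (Y ∩ X).card ≤ Y.card := Finset.card_le_card Finset.inter_subset_left
      rw [Finset.inter_comm] at hc
      have hsub : Y ∩ X = Y := Finset.eq_of_subset_of_card_le Finset.inter_subset_left
        (by omega)
      have hYX : Y ⊆ X := Finset.inter_eq_left.mp hsub
      rw [Finset.union_eq_left.mpr hYX]
      exact Or.inr (Or.inr hX4)
    · right; left
      have : (X ∪ Y)ᶜ ⊆ Yᶜ := by
        rw [Finset.compl_union]; exact Finset.inter_subset_right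
      exact le_trans (Finset.card_le_card this) h1
    · have hR : R X Y := R_cases h hX4 hY4
      rcases R_union hR hc with he | he | he
      · rw [he]; exact Or.inr (Or.inr hY4)
      · rw [he]; exact Or.inr (Or.inr hX4)
      · right; left
        rw [he]
        simp

lemma not_mem_E0 {A B U : Finset (Fin n)} {x y : Fin n} (hx : x ∈ U) (hy : y ∈ U)
    (hxy : x ≠ y) (h2 : 2 ≤ Uᶜ.card) (hA : U ≠ A) (hA' : U ≠ Aᶜ) (hB : U ≠ B)
    (hB' : U ≠ Bᶜ) : U ∉ E0 A B := by
  intro hU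
  rcases hU with h | h | h | h | h | h
  · have : 1 < U.card := Finset.one_lt_card.mpr ⟨x, hx, y, hy, hxy⟩
    omega
  · omega
  · exact hA h
  · exact hA' h
  · exact hB h
  · exact hB' h

theorem ortho_one_iff (n : ℕ) (hn : 4 < n) (A B : Finset (Fin n)) :
    Ortho 1 n A B ↔ (A ⊆ B ∨ B ⊆ A ∨ A ∩ B = ∅ ∨ A ∪ B = Finset.univ) := by
  constructor
  · -- hard direction
    intro hO
    by_contra hcon
    push_neg at hcon
    obtain ⟨hAB, hBA, hI, hU⟩ := hcon
    obtain ⟨xb, hxbA, hxbB⟩ := Finset.not_subset.mp hAB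
    obtain ⟨xc, hxcB, hxcA⟩ := Finset.not_subset.mp hBA
    obtain ⟨xa, hxa⟩ := hI
    have hxaA : xa ∈ A := (Finset.mem_inter.mp hxa).1
    have hxaB : xa ∈ B := (Finset.mem_inter.mp hxa).2
    have hdne : (Aᶜ ∩ Bᶜ).Nonempty := by
      rw [Finset.nonempty_iff_ne_empty, ← Finset.compl_union]
      intro hcc
      exact hU (by rwa [Finset.compl_eq_empty_iff] at hcc)
    obtain ⟨xd, hxd⟩ := hdne
    have hxdA : xd ∉ A := by
      have := (Finset.mem_inter.mp hxd).1; simpa using this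
    have hxdB : xd ∉ B := by
      have := (Finset.mem_inter.mp hxd).2; simpa using this
    -- region cards
    have hca : 1 ≤ (A ∩ B).card := Finset.one_le_card.mpr ⟨xa, hxa⟩
    have hcb : 1 ≤ (A \ B).card :=
      Finset.one_le_card.mpr ⟨xb, Finset.mem_sdiff.mpr ⟨hxbA, hxbB⟩⟩
    have hcc : 1 ≤ (B \ A).card :=
      Finset.one_le_card.mpr ⟨xc, Finset.mem_sdiff.mpr ⟨hxcB, hxcA⟩⟩
    have hcd : 1 ≤ (Aᶜ ∩ Bᶜ).card := Finset.one_le_card.mpr ⟨xd, hxd⟩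
    have hsum : (A ∪ B).card + (Aᶜ ∩ Bᶜ).card = n := by
      rw [← Finset.compl_union]
      simpa using Finset.card_add_card_compl (A ∪ B)
    have hdecomp : A ∪ B = (A ∩ B) ∪ (A \ B) ∪ (B \ A) := by
      ext x
      simp only [Finset.mem_union, Finset.mem_inter, Finset.mem_sdiff]
      tauto
    have hcub : (A ∪ B).card ≤ (A ∩ B).card + (A \ B).card + (B \ A).card := by
      rw [hdecomp]
      calc ((A ∩ B) ∪ (A \ B) ∪ (B \ A)).card
          ≤ ((A ∩ B) ∪ (A \ B)).card + (B \ A).card := Finset.card_union_le _ _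
        _ ≤ (A ∩ B).card + (A \ B).card + (B \ A).card := by
            have := Finset.card_union_le (A ∩ B) (A \ B); omega
    have hbig : 2 ≤ (A ∩ B).card ∨ 2 ≤ (A \ B).card ∨ 2 ≤ (B \ A).card ∨
        2 ≤ (Aᶜ ∩ Bᶜ).card := by omega
    have hKclr := memK_clr 1 n ({A, B} : Family n)
    have hAclr : A ∈ clr 1 n {A, B} := subset_clr 1 n _ (by left; rfl)
    have hBclr : B ∈ clr 1 n {A, B} := subset_clr 1 n _ (by right; rfl)
    have hAc : Aᶜ ∈ clr 1 n {A, B} := hKclr.2.1 A hAclr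
    have hBc : Bᶜ ∈ clr 1 n {A, B} := hKclr.2.1 B hBclr
    have hclr_eq : clr 1 n ({A, B} : Family n) = E0 A B := by
      rw [hO, clbot_eq]
    -- sdiff rewrites
    have hAsB : A \ B = A ∩ Bᶜ := by ext x; simp [Finset.mem_sdiff]
    have hBsA : B \ A = Aᶜ ∩ B := by
      ext x; simp only [Finset.mem_sdiff, Finset.mem_inter, Finset.mem_compl]; tauto
    rcases hbig with h2 | h2 | h2 | h2
    · -- U = Aᶜ ∪ Bᶜ
      have hUclr : Aᶜ ∪ Bᶜ ∈ clr 1 n {A, B} := hKclr.2.2 _ hAc _ hBc hcd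
      rw [hclr_eq] at hUclr
      refine not_mem_E0 (x := xb) (y := xc) ?_ ?_ ?_ ?_ ?_ ?_ ?_ ?_ hUclr
      · exact Finset.mem_union_right _ (Finset.mem_compl.mpr hxbB)
      · exact Finset.mem_union_left _ (Finset.mem_compl.mpr hxcA)
      · intro he; subst he; exact hxcA hxbA
      · rw [Finset.compl_union, compl_compl, compl_compl]; omega
      · intro hEq
        have : xc ∈ A := hEq ▸ Finset.mem_union_left _ (Finset.mem_compl.mpr hxcA)
        exact hxcA this
      · intro hEq
        have : xb ∈ Aᶜ := hEq ▸ Finset.mem_union_right _ (Finset.mem_compl.mpr hxbB)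
        exact (Finset.mem_compl.mp this) hxbA
      · intro hEq
        have : xb ∈ B := hEq ▸ Finset.mem_union_right _ (Finset.mem_compl.mpr hxbB)
        exact hxbB this
      · intro hEq
        have : xc ∈ Bᶜ := hEq ▸ Finset.mem_union_left _ (Finset.mem_compl.mpr hxcA)
        exact (Finset.mem_compl.mp this) hxcB
    · -- U = Aᶜ ∪ B, complement = A ∩ Bᶜ = A \ B
      have hcard : 1 ≤ (Aᶜ ∩ B).card := by rw [← hBsA]; exact hcc
      have hUclr : Aᶜ ∪ B ∈ clr 1 n {A, B} := hKclr.2.2 _ hAc _ hBclr hcard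
      rw [hclr_eq] at hUclr
      refine not_mem_E0 (x := xa) (y := xd) ?_ ?_ ?_ ?_ ?_ ?_ ?_ ?_ hUclr
      · exact Finset.mem_union_right _ hxaB
      · exact Finset.mem_union_left _ (Finset.mem_compl.mpr hxdA)
      · intro he; subst he; exact hxdB hxaB
      · rw [Finset.compl_union, compl_compl, ← hAsB]; omega
      · intro hEq
        have : xd ∈ A := hEq ▸ Finset.mem_union_left _ (Finset.mem_compl.mpr hxdA)
        exact hxdA this
      · intro hEq
        have : xa ∈ Aᶜ := hEq ▸ Finset.mem_union_right _ hxaB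
        exact (Finset.mem_compl.mp this) hxaA
      · intro hEq
        have : xd ∈ B := hEq ▸ Finset.mem_union_left _ (Finset.mem_compl.mpr hxdA)
        exact hxdB this
      · intro hEq
        have : xa ∈ Bᶜ := hEq ▸ Finset.mem_union_right _ hxaB
        exact (Finset.mem_compl.mp this) hxaB
    · -- U = A ∪ Bᶜ, complement = Aᶜ ∩ B = B \ A
      have hcard : 1 ≤ (A ∩ Bᶜ).card := by rw [← hAsB]; exact hcb
      have hUclr : A ∪ Bᶜ ∈ clr 1 n {A, B} := hKclr.2.2 _ hAclr _ hBc hcard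
      rw [hclr_eq] at hUclr
      refine not_mem_E0 (x := xa) (y := xd) ?_ ?_ ?_ ?_ ?_ ?_ ?_ ?_ hUclr
      · exact Finset.mem_union_left _ hxaA
      · exact Finset.mem_union_right _ (Finset.mem_compl.mpr hxdB)
      · intro he; subst he; exact hxdA hxaA
      · rw [Finset.compl_union, compl_compl, ← hBsA]; omega
      · intro hEq
        have : xd ∈ A := hEq ▸ Finset.mem_union_right _ (Finset.mem_compl.mpr hxdB)
        exact hxdA this
      · intro hEq
        have : xa ∈ Aᶜ := hEq ▸ Finset.mem_union_left _ hxaA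
        exact (Finset.mem_compl.mp this) hxaA
      · intro hEq
        have : xd ∈ B := hEq ▸ Finset.mem_union_right _ (Finset.mem_compl.mpr hxdB)
        exact hxdB this
      · intro hEq
        have : xa ∈ Bᶜ := hEq ▸ Finset.mem_union_left _ hxaA
        exact (Finset.mem_compl.mp this) hxaB
    · -- U = A ∪ B, complement = Aᶜ ∩ Bᶜ
      have hUclr : A ∪ B ∈ clr 1 n {A, B} := hKclr.2.2 _ hAclr _ hBclr hca
      rw [hclr_eq] at hUclr
      refine not_mem_E0 (x := xb) (y := xc) ?_ ?_ ?_ ?_ ?_ ?_ ?_ ?_ hUclr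
      · exact Finset.mem_union_left _ hxbA
      · exact Finset.mem_union_right _ hxcB
      · intro he; subst he; exact hxcA hxbA
      · rw [Finset.compl_union]; omega
      · intro hEq
        have : xc ∈ A := hEq ▸ Finset.mem_union_right _ hxcB
        exact hxcA this
      · intro hEq
        have : xa ∈ Aᶜ := hEq ▸ Finset.mem_union_left _ hxaA
        exact (Finset.mem_compl.mp this) hxaA
      · intro hEq
        have : xb ∈ B := hEq ▸ Finset.mem_union_left _ hxbA
        exact hxbB this
      · intro hEq
        have : xa ∈ Bᶜ := hEq ▸ Finset.mem_union_left _ hxaA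
        exact (Finset.mem_compl.mp this) hxaB
  · -- easy direction
    intro h
    unfold Ortho
    apply subset_antisymm
    · rw [clbot_eq]
      apply Set.sInter_subset_of_mem
      refine ⟨⟨(memKbot_E0 A B).1, (memKbot_E0 A B).2, E0_k2 h⟩, pair_subset_E0 A B⟩
    · exact clbot_subset_clr 1 n {A, B}
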